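/- Let n ≥ 1 be an integer and β ≥ 1 a real number. Let Ω̄ = {−n, −n+2, …, n−2, n} and for m ∈ Ω̄ define w(m) = C(n, (n+m)/2) · exp(β·m²/(2n)). Then there exists m* ∈ Ω̄ with 0 ≤ m* ≤ n such that (i) w(m) ≤ w(m+2) for all m ∈ Ω̄ with 0 ≤ m and m+2 ≤ m*, (ii) w(m+2) ≤ w(m) for all m ∈ Ω̄ with m* ≤ m ≤ n−2, (iii) w(m*) = max{w(m) : m ∈ Ω̄, m ≥ 0}, and (iv) m* > n·√(1 − 1/β). -/

import Mathlib

noncomputable def FF (t : ℝ) : ℝ := Real.log (1+t) - Real.log (1-t)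

lemma FF_zero : FF 0 = 0 := by simp [FF]

lemma FF_hasDerivAt {x : ℝ} (h1 : -1 < x) (h2 : x < 1) :
    HasDerivAt FF (1/(1+x) + 1/(1-x)) x := by
  have hx1 : (1:ℝ) + x ≠ 0 := by nlinarith
  have hx2 : (1:ℝ) - x ≠ 0 := by nlinarith
  have d1 : HasDerivAt (fun t : ℝ => 1 + t) 1 x := by
    simpa using (hasDerivAt_id x).const_add (1:ℝ)
  have d2 : HasDerivAt (fun t : ℝ => 1 - t) (-1) x := by
    simpa using (hasDerivAt_id x).const_sub (1:ℝ)
  have := (d1.log hx1).sub (d2.log hx2)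
  have e : 1/(1+x) + 1/(1-x) = 1/(1+x) - -1/(1-x) := by ring
  rw [e]
  exact this

lemma FF_slope {a b : ℝ} (ha : -1 < a) (hab : a < b) (hb : b < 1) :
    ∃ c ∈ Set.Ioo a b, FF b - FF a = 2/(1 - c^2) * (b - a) := by
  have hcont : ContinuousOn FF (Set.Icc a b) := by
    intro x hx
    exact (FF_hasDerivAt (by cases hx; linarith) (by cases hx; linarith)).continuousAt.continuousWithinAt
  have hdiff : DifferentiableOn ℝ FF (Set.Ioo a b) := by
    intro x hx
    exact (FF_hasDerivAt (by cases hx; linarith) (by cases hx; linarith)).differentiableAt.differentiableWithinAt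
  obtain ⟨c, hc, hder⟩ := exists_deriv_eq_slope FF hab hcont hdiff
  refine ⟨c, hc, ?_⟩
  obtain ⟨hc1, hc2⟩ := hc
  have hd : deriv FF c = 1/(1+c) + 1/(1-c) := (FF_hasDerivAt (by linarith) (by linarith)).deriv
  have hba : b - a ≠ 0 := by linarith
  have h1 : (1:ℝ) + c ≠ 0 := by nlinarith
  have h2 : (1:ℝ) - c ≠ 0 := by nlinarith
  rw [hd] at hder
  have h3 : (1:ℝ) - c^2 ≠ 0 := by nlinarith
  field_simp at hder ⊢
  linear_combination (-1 : ℝ) * hder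

lemma FF_le {t : ℝ} (h0 : 0 < t) (h1 : t < 1) : FF t ≤ 2*t/(1-t^2) := by
  obtain ⟨c, hc, h⟩ := FF_slope (a := 0) (b := t) (by norm_num) h0 h1
  obtain ⟨hc1, hc2⟩ := hc
  rw [FF_zero, sub_zero, sub_zero] at h
  have hct : 1 - t^2 ≤ 1 - c^2 := by nlinarith
  have h1t : (0:ℝ) < 1 - t^2 := by nlinarith
  have h1c : (0:ℝ) < 1 - c^2 := by nlinarith
  have : 2/(1-c^2) ≤ 2/(1-t^2) := by
    apply div_le_div_of_nonneg_left (by norm_num) h1t hct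
  rw [h]
  calc 2/(1-c^2) * t ≤ 2/(1-t^2) * t := by nlinarith
    _ = 2*t/(1-t^2) := by ring

lemma FF_slope_lt {t1 t2 : ℝ} (h0 : 0 < t1) (h12 : t1 < t2) (h2 : t2 < 1) :
    FF t1 * t2 < FF t2 * t1 := by
  obtain ⟨c1, hc1, hA⟩ := FF_slope (a := 0) (b := t1) (by norm_num) h0 (by linarith)
  obtain ⟨c2, hc2, hB⟩ := FF_slope (a := t1) (b := t2) (by linarith) h12 h2
  obtain ⟨hc1a, hc1b⟩ := hc1
  obtain ⟨hc2a, hc2b⟩ := hc2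
  rw [FF_zero, sub_zero, sub_zero] at hA
  have p1 : (0:ℝ) < 1 - c1^2 := by nlinarith
  have p2 : (0:ℝ) < 1 - c2^2 := by nlinarith
  have hcc : c1 < c2 := by linarith
  have hXY : 2/(1-c1^2) < 2/(1-c2^2) := by
    apply div_lt_div_of_pos_left (by norm_num) p2
    nlinarith
  have key : 2/(1-c1^2) * (t1*(t2-t1)) < 2/(1-c2^2) * (t1*(t2-t1)) :=
    mul_lt_mul_of_pos_right hXY (by nlinarith)
  nlinarith [key, hA, hB]

lemma step_eq (n : ℕ) (hn : 1 ≤ n) (β : ℝ) (w : ℤ → ℝ)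
    (hw : ∀ m : ℤ, w m = (n.choose (((n : ℤ) + m) / 2).toNat : ℝ) *
      Real.exp (β * (m : ℝ) ^ 2 / (2 * n)))
    (m : ℤ) (hp : m % 2 = (n:ℤ) % 2) (h0 : 0 ≤ m) (h2 : m ≤ (n:ℤ) - 2) :
    w (m+2) * ((n:ℝ) + m + 2) =
      w m * (((n:ℝ) - m) * Real.exp (2*β*((m:ℝ)+1)/n)) := by
  obtain ⟨k, hk⟩ : ∃ k : ℕ, (n:ℤ) + m = 2*(k:ℤ) := ⟨(((n:ℤ)+m)/2).toNat, by omega⟩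
  have e1 : (((n:ℤ) + m)/2).toNat = k := by omega
  have e2 : (((n:ℤ) + (m+2))/2).toNat = k+1 := by omega
  have hkn : k + 1 ≤ n := by omega
  have hnR : (0:ℝ) < n := by exact_mod_cast hn
  have hC : (n.choose (k+1) : ℝ) * ((k:ℝ)+1) = (n.choose k : ℝ) * ((n:ℝ) - k) := by
    have h := congrArg (Nat.cast (R := ℝ)) (Nat.choose_succ_right_eq n k)
    push_cast [Nat.cast_sub (show k ≤ n by omega)] at h
    linarith [h]
  have hkR : (n:ℝ) + (m:ℝ) = 2*(k:ℝ) := by exact_mod_cast hk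
  rw [hw, hw, e1, e2]
  have hE : Real.exp (β * (((m:ℤ)+2 : ℤ) : ℝ) ^ 2 / (2*(n:ℝ))) =
      Real.exp (β * (m:ℝ)^2 / (2*(n:ℝ))) * Real.exp (2*β*((m:ℝ)+1)/(n:ℝ)) := by
    rw [← Real.exp_add]
    congr 1
    push_cast
    field_simp
    ring
  push_cast
  push_cast at hE
  rw [hE]
  have hmr : (m:ℝ) = 2*(k:ℝ) - n := by linarith
  set E1 := Real.exp (β * (m:ℝ)^2 / (2*(n:ℝ)))
  set E := Real.exp (2*β*((m:ℝ)+1)/(n:ℝ))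
  rw [hmr]
  linear_combination (2 * E1 * E) * hC

set_option maxHeartbeats 1600000 in
/-- In the low-temperature regime `β ≥ 1`, the magnetization pushforward of the
mean-field Ising model restricted to nonnegative magnetizations is unimodal with
mode strictly above `n·√(1 − 1/β)`. -/
theorem meanFieldIsing_projected_unimodal_lowTemp (n : ℕ) (hn : 1 ≤ n)
    (β : ℝ) (hβ : 1 ≤ β)
    (w : ℤ → ℝ)
    (hw : ∀ m : ℤ, w m = (n.choose (((n : ℤ) + m) / 2).toNat : ℝ) *
      Real.exp (β * (m : ℝ) ^ 2 / (2 * n))) :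
    ∃ mstar : ℤ, 0 ≤ mstar ∧ mstar ≤ (n : ℤ) ∧ mstar % 2 = (n : ℤ) % 2 ∧
      (∀ m : ℤ, m % 2 = (n : ℤ) % 2 → 0 ≤ m → m + 2 ≤ mstar → w m ≤ w (m + 2)) ∧
      (∀ m : ℤ, m % 2 = (n : ℤ) % 2 → mstar ≤ m → m ≤ (n : ℤ) - 2 → w (m + 2) ≤ w m) ∧
      (∀ m : ℤ, m % 2 = (n : ℤ) % 2 → 0 ≤ m → m ≤ (n : ℤ) → w m ≤ w mstar) ∧
      (n : ℝ) * Real.sqrt (1 - 1 / β) < (mstar : ℝ) := by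
  classical
  have hnR : (1:ℝ) ≤ n := by exact_mod_cast hn
  have hnR0 : (0:ℝ) < n := by linarith
  set s := Real.sqrt (1 - 1/β) with hs
  have hβ0 : (0:ℝ) < β := by linarith
  have hq0 : 0 < 1/β := by positivity
  have hq1 : 1/β ≤ 1 := by rw [div_le_one hβ0]; linarith
  have hs0 : 0 ≤ s := Real.sqrt_nonneg _
  have hs2 : s^2 = 1 - 1/β := Real.sq_sqrt (by linarith)
  have hs1 : s < 1 := by nlinarith
  -- positivity of w
  have wpos : ∀ m : ℤ, 0 ≤ m → m ≤ (n:ℤ) → 0 < w m := by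
    intro m h0 h1
    rw [hw]
    have hch : 0 < n.choose (((n:ℤ)+m)/2).toNat := Nat.choose_pos (by omega)
    have hchR : (0:ℝ) < (n.choose (((n:ℤ)+m)/2).toNat : ℝ) := by exact_mod_cast hch
    exact mul_pos hchR (Real.exp_pos _)
  -- step implications
  have stepUp : ∀ m : ℤ, m % 2 = (n:ℤ)%2 → 0 ≤ m → m ≤ (n:ℤ)-2 →
      ((n:ℝ)+(m:ℝ)+2 < ((n:ℝ)-(m:ℝ)) * Real.exp (2*β*((m:ℝ)+1)/(n:ℝ))) →
      w m < w (m+2) := by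
    intro m hp h0 h2 h
    have he := step_eq n hn β w hw m hp h0 h2
    have h0R : (0:ℝ) ≤ (m:ℝ) := by exact_mod_cast h0
    have hA : (0:ℝ) < (n:ℝ)+(m:ℝ)+2 := by linarith
    have hwm := wpos m h0 (by omega)
    have h1 : w m * ((n:ℝ)+(m:ℝ)+2) < w m * (((n:ℝ)-(m:ℝ)) * Real.exp (2*β*((m:ℝ)+1)/(n:ℝ))) :=
      (mul_lt_mul_iff_right₀ hwm).mpr h
    rw [← he] at h1
    exact lt_of_mul_lt_mul_right h1 hA.le
  have stepDown : ∀ m : ℤ, m % 2 = (n:ℤ)%2 → 0 ≤ m → m ≤ (n:ℤ)-2 →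
      (((n:ℝ)-(m:ℝ)) * Real.exp (2*β*((m:ℝ)+1)/(n:ℝ)) ≤ (n:ℝ)+(m:ℝ)+2) →
      w (m+2) ≤ w m := by
    intro m hp h0 h2 h
    have he := step_eq n hn β w hw m hp h0 h2
    have h0R : (0:ℝ) ≤ (m:ℝ) := by exact_mod_cast h0
    have hA : (0:ℝ) < (n:ℝ)+(m:ℝ)+2 := by linarith
    have hwm := wpos m h0 (by omega)
    have h1 : w m * (((n:ℝ)-(m:ℝ)) * Real.exp (2*β*((m:ℝ)+1)/(n:ℝ)))
        ≤ w m * ((n:ℝ)+(m:ℝ)+2) := (mul_le_mul_iff_right₀ hwm).mpr h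
    rw [← he] at h1
    exact le_of_mul_le_mul_right h1 hA
  -- bridge to FF
  have condIffLt : ∀ m : ℤ, 0 ≤ m → m ≤ (n:ℤ)-2 →
      (((n:ℝ)+(m:ℝ)+2 < ((n:ℝ)-(m:ℝ)) * Real.exp (2*β*((m:ℝ)+1)/(n:ℝ))) ↔
        FF (((m:ℝ)+1)/((n:ℝ)+1)) < (2*β*((n:ℝ)+1)/(n:ℝ)) * (((m:ℝ)+1)/((n:ℝ)+1))) := by
    intro m h0 h2
    have h0R : (0:ℝ) ≤ (m:ℝ) := by exact_mod_cast h0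
    have h2R : (m:ℝ) ≤ (n:ℝ) - 2 := by
      have : ((m:ℤ):ℝ) ≤ (((n:ℤ)-2 : ℤ):ℝ) := by exact_mod_cast h2
      push_cast at this; linarith
    have hA : (0:ℝ) < (n:ℝ)+(m:ℝ)+2 := by linarith
    have hB : (0:ℝ) < (n:ℝ)-(m:ℝ) := by linarith
    have hn1 : (0:ℝ) < (n:ℝ)+1 := by linarith
    set t := ((m:ℝ)+1)/((n:ℝ)+1) with htdef
    have harg : 2*β*((m:ℝ)+1)/(n:ℝ) = (2*β*((n:ℝ)+1)/(n:ℝ)) * t := by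
      rw [htdef]; field_simp; try ring
    have hFF : FF t = Real.log ((n:ℝ)+(m:ℝ)+2) - Real.log ((n:ℝ)-(m:ℝ)) := by
      have e1 : 1 + t = ((n:ℝ)+(m:ℝ)+2)/((n:ℝ)+1) := by rw [htdef]; field_simp; try ring
      have e2 : 1 - t = ((n:ℝ)-(m:ℝ))/((n:ℝ)+1) := by rw [htdef]; field_simp; try ring
      simp only [FF]
      rw [e1, e2, Real.log_div hA.ne' hn1.ne', Real.log_div hB.ne' hn1.ne']
      ring
    have hd : (0:ℝ) < ((n:ℝ)+(m:ℝ)+2)/((n:ℝ)-(m:ℝ)) := div_pos hA hB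
    have e3 : Real.log (((n:ℝ)+(m:ℝ)+2)/((n:ℝ)-(m:ℝ))) = FF t := by
      rw [Real.log_div hA.ne' hB.ne', hFF]
    rw [harg, ← e3, Real.log_lt_iff_lt_exp hd, div_lt_iff₀ hB, mul_comm]
  have condIffLe : ∀ m : ℤ, 0 ≤ m → m ≤ (n:ℤ)-2 →
      (((n:ℝ)+(m:ℝ)+2 ≤ ((n:ℝ)-(m:ℝ)) * Real.exp (2*β*((m:ℝ)+1)/(n:ℝ))) ↔
        FF (((m:ℝ)+1)/((n:ℝ)+1)) ≤ (2*β*((n:ℝ)+1)/(n:ℝ)) * (((m:ℝ)+1)/((n:ℝ)+1))) := by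
    intro m h0 h2
    have h0R : (0:ℝ) ≤ (m:ℝ) := by exact_mod_cast h0
    have h2R : (m:ℝ) ≤ (n:ℝ) - 2 := by
      have : ((m:ℤ):ℝ) ≤ (((n:ℤ)-2 : ℤ):ℝ) := by exact_mod_cast h2
      push_cast at this; linarith
    have hA : (0:ℝ) < (n:ℝ)+(m:ℝ)+2 := by linarith
    have hB : (0:ℝ) < (n:ℝ)-(m:ℝ) := by linarith
    have hn1 : (0:ℝ) < (n:ℝ)+1 := by linarith
    set t := ((m:ℝ)+1)/((n:ℝ)+1) with htdef
    have harg : 2*β*((m:ℝ)+1)/(n:ℝ) = (2*β*((n:ℝ)+1)/(n:ℝ)) * t := by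
      rw [htdef]; field_simp; try ring
    have hFF : FF t = Real.log ((n:ℝ)+(m:ℝ)+2) - Real.log ((n:ℝ)-(m:ℝ)) := by
      have e1 : 1 + t = ((n:ℝ)+(m:ℝ)+2)/((n:ℝ)+1) := by rw [htdef]; field_simp; try ring
      have e2 : 1 - t = ((n:ℝ)-(m:ℝ))/((n:ℝ)+1) := by rw [htdef]; field_simp; try ring
      simp only [FF]
      rw [e1, e2, Real.log_div hA.ne' hn1.ne', Real.log_div hB.ne' hn1.ne']
      ring
    have hd : (0:ℝ) < ((n:ℝ)+(m:ℝ)+2)/((n:ℝ)-(m:ℝ)) := div_pos hA hB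
    have e3 : Real.log (((n:ℝ)+(m:ℝ)+2)/((n:ℝ)-(m:ℝ))) = FF t := by
      rw [Real.log_div hA.ne' hB.ne', hFF]
    rw [harg, ← e3, Real.log_le_iff_le_exp hd, div_le_iff₀ hB, mul_comm]
  -- F1 : downward propagation (strictly)
  have F1 : ∀ m1 m2 : ℤ, 0 ≤ m1 → m1 < m2 → m2 ≤ (n:ℤ)-2 →
      (((n:ℝ)+(m2:ℝ)+2 ≤ ((n:ℝ)-(m2:ℝ)) * Real.exp (2*β*((m2:ℝ)+1)/(n:ℝ)))) →
      ((n:ℝ)+(m1:ℝ)+2 < ((n:ℝ)-(m1:ℝ)) * Real.exp (2*β*((m1:ℝ)+1)/(n:ℝ)) ) := by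
    intro m1 m2 h0 h12 h2 hcond
    rw [condIffLe m2 (by omega) h2] at hcond
    rw [condIffLt m1 h0 (by omega)]
    have h0R : (0:ℝ) ≤ (m1:ℝ) := by exact_mod_cast h0
    have h12R : (m1:ℝ) < (m2:ℝ) := by exact_mod_cast h12
    have h2R : (m2:ℝ) ≤ (n:ℝ) - 2 := by
      have : ((m2:ℤ):ℝ) ≤ (((n:ℤ)-2 : ℤ):ℝ) := by exact_mod_cast h2
      push_cast at this; linarith
    have hn1 : (0:ℝ) < (n:ℝ)+1 := by linarith
    set t1 := ((m1:ℝ)+1)/((n:ℝ)+1)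
    set t2 := ((m2:ℝ)+1)/((n:ℝ)+1)
    have ht1 : 0 < t1 := div_pos (by linarith) hn1
    have ht2 : 0 < t2 := div_pos (by linarith) hn1
    have ht2' : t2 < 1 := by
      rw [div_lt_one hn1]; linarith
    have h12t : t1 < t2 := by
      rw [div_lt_div_iff₀ hn1 hn1]; nlinarith
    have hkey := FF_slope_lt ht1 h12t ht2'
    have hc' : FF t2 * t1 ≤ (2*β*((n:ℝ)+1)/(n:ℝ)) * t2 * t1 :=
      mul_le_mul_of_nonneg_right hcond ht1.le
    nlinarith [hkey, hc', ht1, ht2]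
  -- F2 : strict step condition below the threshold
  have F2 : ∀ m : ℤ, 0 ≤ m → m ≤ (n:ℤ)-2 → (m:ℝ) ≤ (n:ℝ)*s →
      ((n:ℝ)+(m:ℝ)+2 < ((n:ℝ)-(m:ℝ)) * Real.exp (2*β*((m:ℝ)+1)/(n:ℝ))) := by
    intro m h0 h2 hms
    rw [condIffLt m h0 h2]
    have h0R : (0:ℝ) ≤ (m:ℝ) := by exact_mod_cast h0
    have h2R : (m:ℝ) ≤ (n:ℝ) - 2 := by
      have : ((m:ℤ):ℝ) ≤ (((n:ℤ)-2 : ℤ):ℝ) := by exact_mod_cast h2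
      push_cast at this; linarith
    have hn1 : (0:ℝ) < (n:ℝ)+1 := by linarith
    set t := ((m:ℝ)+1)/((n:ℝ)+1) with htdef
    have ht0 : 0 < t := div_pos (by linarith) hn1
    have ht1 : t < 1 := by rw [htdef, div_lt_one hn1]; linarith
    have hFFle := FF_le ht0 ht1
    -- arithmetic: (m+1)^2 < (n+1)^2 - n(n+1)/β
    have hβs : 1/β = 1 - s^2 := by linarith [hs2]
    have hb2 : (n:ℝ)*((n:ℝ)+1)/β = (n:ℝ)*((n:ℝ)+1)*(1-s^2) := by
      rw [div_eq_mul_one_div, hβs]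
    have hsq : ((m:ℝ)+1)^2 ≤ ((n:ℝ)*s+1)^2 := by nlinarith [hms, h0R, mul_nonneg hnR0.le hs0]
    have h1s : (0:ℝ) < (1-s)^2 := pow_pos (by linarith) 2
    have expand : ((n:ℝ)+1)^2 - (n:ℝ)*((n:ℝ)+1)*(1-s^2) = ((n:ℝ)*s+1)^2 + (n:ℝ)*(1-s)^2 := by
      ring
    have key2 : ((m:ℝ)+1)^2 < ((n:ℝ)+1)^2 - (n:ℝ)*((n:ℝ)+1)/β := by
      rw [hb2]; linarith [hsq, mul_pos hnR0 h1s, expand]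
    -- hence t^2 < 1 - n/(β(n+1))
    have ht2 : t^2 < 1 - (n:ℝ)/(β*((n:ℝ)+1)) := by
      rw [htdef, div_pow, div_lt_iff₀ (by positivity)]
      have : (1 - (n:ℝ)/(β*((n:ℝ)+1))) * ((n:ℝ)+1)^2 = ((n:ℝ)+1)^2 - (n:ℝ)*((n:ℝ)+1)/β := by
        field_simp
      rw [this]; exact key2
    have hpos : (0:ℝ) < (n:ℝ)/(β*((n:ℝ)+1)) := by positivity
    have h1t2 : (n:ℝ)/(β*((n:ℝ)+1)) < 1 - t^2 := by linarith
    have hfrac : 2/(1-t^2) < 2*β*((n:ℝ)+1)/(n:ℝ) := by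
      have h2' : 2/(1-t^2) < 2/((n:ℝ)/(β*((n:ℝ)+1))) :=
        div_lt_div_of_pos_left (by norm_num) hpos h1t2
      have h3' : 2/((n:ℝ)/(β*((n:ℝ)+1))) = 2*β*((n:ℝ)+1)/(n:ℝ) := by
        field_simp
      linarith [h2', h3'.ge, h3'.le]
    calc FF t ≤ 2*t/(1-t^2) := hFFle
      _ = (2/(1-t^2)) * t := by ring
      _ < (2*β*((n:ℝ)+1)/(n:ℝ)) * t := by
          exact mul_lt_mul_of_pos_right hfrac ht0
  -- the chain lemma
  have chain : ∀ M : ℤ, M % 2 = (n:ℤ)%2 →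
      (∀ m : ℤ, m % 2 = (n:ℤ)%2 → 0 ≤ m → m + 2 ≤ M → w m ≤ w (m+2)) →
      (∀ m : ℤ, m % 2 = (n:ℤ)%2 → M ≤ m → m ≤ (n:ℤ)-2 → w (m+2) ≤ w m) →
      ∀ m : ℤ, m % 2 = (n:ℤ)%2 → 0 ≤ m → m ≤ (n:ℤ) → w m ≤ w M := by
    intro M hMp hup hdown
    have upc : ∀ d : ℕ, ∀ m : ℤ, m % 2 = (n:ℤ)%2 → 0 ≤ m → M - m = 2*(d:ℤ) → w m ≤ w M := by
      intro d
      induction d with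
      | zero =>
        intro m _ _ hd
        have h : m = M := by omega
        exact le_of_eq (congrArg w h)
      | succ k ih =>
        intro m hp h0 hd
        have h1 := hup m hp h0 (by omega)
        have h2' := ih (m+2) (by omega) (by omega) (by omega)
        linarith
    have downc : ∀ d : ℕ, ∀ m : ℤ, m % 2 = (n:ℤ)%2 → m ≤ (n:ℤ) → m - M = 2*(d:ℤ) → w m ≤ w M := by
      intro d
      induction d with
      | zero =>
        intro m _ _ hd
        have h : m = M := by omega
        exact le_of_eq (congrArg w h)
      | succ k ih =>
        intro m hp hmn hd
        have h1 := hdown (m-2) (by omega) (by omega) (by omega)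
        have h2' := ih (m-2) (by omega) (by omega) (by omega)
        have he : (m-2)+2 = m := by ring
        rw [he] at h1
        linarith
    intro m hp h0 hmn
    rcases le_or_gt m M with h|h
    · exact upc ((M - m)/2).toNat m hp h0 (by omega)
    · exact downc ((m - M)/2).toNat m hp hmn (by omega)
  -- the candidate set
  set T : Finset ℤ := (Finset.Icc 0 ((n:ℤ)-2)).filter
      (fun m => m % 2 = (n:ℤ) % 2 ∧
        (n:ℝ)+(m:ℝ)+2 < ((n:ℝ)-(m:ℝ)) * Real.exp (2*β*((m:ℝ)+1)/(n:ℝ))) with hT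
  by_cases hTne : T.Nonempty
  · set M := T.max' hTne with hMdef
    have hM : M ∈ T := T.max'_mem hTne
    rw [hT, Finset.mem_filter, Finset.mem_Icc] at hM
    obtain ⟨⟨hM0, hM2⟩, hMp, hMP⟩ := hM
    have hi : ∀ m : ℤ, m % 2 = (n:ℤ)%2 → 0 ≤ m → m + 2 ≤ M+2 → w m ≤ w (m+2) := by
      intro m hp h0 hle
      rcases eq_or_lt_of_le (show m ≤ M by omega) with heq|hlt
      · rw [heq]
        exact (stepUp M hMp hM0 hM2 hMP).le
      · exact (stepUp m hp h0 (by omega) (F1 m M h0 hlt hM2 hMP.le)).le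
    have hii : ∀ m : ℤ, m % 2 = (n:ℤ)%2 → M+2 ≤ m → m ≤ (n:ℤ)-2 → w (m+2) ≤ w m := by
      intro m hp hge h2
      have h0m : 0 ≤ m := by omega
      apply stepDown m hp h0m h2
      by_contra hc
      push_neg at hc
      have hmT : m ∈ T := by
        rw [hT, Finset.mem_filter, Finset.mem_Icc]
        exact ⟨⟨h0m, h2⟩, hp, hc⟩
      have := T.le_max' m hmT
      omega
    refine ⟨M+2, by omega, by omega, by omega, hi, hii,
      chain (M+2) (by omega) hi hii, ?_⟩
    by_contra hc
    push_neg at hc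
    have hlt : ((M+2 : ℤ):ℝ) < (n:ℝ) := by
      nlinarith [hc, mul_pos hnR0 (show (0:ℝ) < 1 - s by linarith)]
    have hltZ : M+2 < (n:ℤ) := by exact_mod_cast hlt
    have hle2 : M+2 ≤ (n:ℤ)-2 := by omega
    have hcond := F2 (M+2) (by omega) hle2 hc
    have hmT : M+2 ∈ T := by
      rw [hT, Finset.mem_filter, Finset.mem_Icc]
      exact ⟨⟨by omega, hle2⟩, by omega, hcond⟩
    have := T.le_max' _ hmT
    omega
  · have hi0 : ∀ m : ℤ, m % 2 = (n:ℤ)%2 → 0 ≤ m → m + 2 ≤ (n:ℤ)%2 → w m ≤ w (m+2) := by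
      intro m _ h0 hle
      exfalso; omega
    have hii0 : ∀ m : ℤ, m % 2 = (n:ℤ)%2 → (n:ℤ)%2 ≤ m → m ≤ (n:ℤ)-2 → w (m+2) ≤ w m := by
      intro m hp hge h2
      have h0m : 0 ≤ m := by omega
      apply stepDown m hp h0m h2
      by_contra hc
      push_neg at hc
      refine hTne ⟨m, ?_⟩
      rw [hT, Finset.mem_filter, Finset.mem_Icc]
      exact ⟨⟨h0m, h2⟩, hp, hc⟩
    refine ⟨(n:ℤ)%2, by omega, by omega, by omega, hi0, hii0,
      chain ((n:ℤ)%2) (by omega) hi0 hii0, ?_⟩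
    by_contra hc
    push_neg at hc
    by_cases hle : (n:ℤ)%2 ≤ (n:ℤ)-2
    · have hcond := F2 ((n:ℤ)%2) (by omega) hle hc
      refine hTne ⟨(n:ℤ)%2, ?_⟩
      rw [hT, Finset.mem_filter, Finset.mem_Icc]
      exact ⟨⟨by omega, hle⟩, by omega, hcond⟩
    · have hn1 : n = 1 := by omega
      have hmod : ((n:ℤ)%2) = 1 := by omega
      rw [hmod] at hc
      have hnn : (n:ℝ) = 1 := by rw [hn1]; norm_num
      push_cast at hc
      nlinarith [hc, hs1, hnn.le, hnn.ge]
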